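/- For every n-GNN A all of whose activation functions are eventually constant, there exists an n-MP² formula ψ_A(x) equivalent to A; moreover, if A is local the formula can be taken in local MP², and if A is outgoing-only the formula can be taken outgoing-only. -/

import Mathlib

set_option maxHeartbeats 1000000

/-- An `n`-graph: a nonempty finite vertex set, a set of directed edges,
and `n` vertex colors. -/
structure NGraph (n : ℕ) where
  V : Type
  [fintypeV : Fintype V]
  [decEqV : DecidableEq V]
  nonemptyV : Nonempty V
  E : V → V → Bool
  U : Fin n → V → Bool

attribute [instance] NGraph.fintypeV NGraph.decEqV

/-- An `n`-GNN.  Layer `ℓ+1` (for `0 ≤ ℓ < L`) has activation function `act ℓ`,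
coefficient matrices `C ℓ`, `Aout ℓ`, `Ain ℓ`, `R ℓ` and bias vector `b ℓ`. -/
structure GNN (n : ℕ) where
  L : ℕ
  Lpos : 0 < L
  d : ℕ → ℕ
  d0 : d 0 = n
  dpos : ∀ ℓ, 0 < d ℓ
  act : ℕ → ℚ → ℚ
  C : (ℓ : ℕ) → Matrix (Fin (d (ℓ+1))) (Fin (d ℓ)) ℚ
  Aout : (ℓ : ℕ) → Matrix (Fin (d (ℓ+1))) (Fin (d ℓ)) ℚ
  Ain : (ℓ : ℕ) → Matrix (Fin (d (ℓ+1))) (Fin (d ℓ)) ℚ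
  R : (ℓ : ℕ) → Matrix (Fin (d (ℓ+1))) (Fin (d ℓ)) ℚ
  b : (ℓ : ℕ) → Fin (d (ℓ+1)) → ℚ

/-- The feature maps `ξ⁽ℓ⁾` computed by a GNN on an `n`-graph. -/
def GNN.feat {n : ℕ} (A : GNN n) (G : NGraph n) : (ℓ : ℕ) → G.V → (Fin (A.d ℓ) → ℚ)
  | 0 => fun v i => if G.U (Fin.cast A.d0 i) v then 1 else 0
  | ℓ+1 => fun v i =>
      A.act ℓ
        ((A.C ℓ).mulVec (A.feat G ℓ v) i
          + (A.Aout ℓ).mulVec (∑ u ∈ Finset.univ.filter (fun u => G.E v u), A.feat G ℓ u) i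
          + (A.Ain ℓ).mulVec (∑ u ∈ Finset.univ.filter (fun u => G.E u v), A.feat G ℓ u) i
          + (A.R ℓ).mulVec (∑ u, A.feat G ℓ u) i
          + A.b ℓ i)

/-- A GNN accepts `(G, v)` if the first entry of the final feature vector is `≥ 1/2`. -/
def GNN.accepts {n : ℕ} (A : GNN n) (G : NGraph n) (v : G.V) : Prop :=
  1/2 ≤ A.feat G A.L v ⟨0, A.dpos A.L⟩

/-- A GNN is satisfiable if it accepts some node of some graph. -/
def GNN.Satisfiable {n : ℕ} (A : GNN n) : Prop :=
  ∃ (G : NGraph n) (v : G.V), A.accepts G v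

/-- A GNN is universally satisfiable if it accepts every node of some graph. -/
def GNN.UnivSatisfiable {n : ℕ} (A : GNN n) : Prop :=
  ∃ G : NGraph n, ∀ v : G.V, A.accepts G v

/-- A GNN is local if all its global-readout matrices are zero. -/
def GNN.IsLocal {n : ℕ} (A : GNN n) : Prop := ∀ ℓ < A.L, A.R ℓ = 0

/-- A GNN is outgoing-only if all its incoming-aggregation matrices are zero. -/
def GNN.IsOutgoingOnly {n : ℕ} (A : GNN n) : Prop := ∀ ℓ < A.L, A.Ain ℓ = 0

/-- A function is eventually constant if it is constant below some left threshold
and constant above some right threshold. -/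
def EventuallyConstant (f : ℚ → ℚ) : Prop :=
  ∃ tl tr : ℚ, tl < tr ∧ (∀ x ≤ tl, f x = f tl) ∧ (∀ x ≥ tr, f x = f tr)

/-- The truncated ReLU. -/
def trReLU (x : ℚ) : ℚ := min (max x 0) 1

/-- The standard ReLU. -/
def ReLU (x : ℚ) : ℚ := max x 0

/-- The `ℓ`-spectrum of a GNN: all values of the `ℓ`-th feature map over all
`n`-graphs and vertices. -/
def GNN.spectrum {n : ℕ} (A : GNN n) (ℓ : ℕ) : Set (Fin (A.d ℓ) → ℚ) :=
  { s | ∃ (G : NGraph n) (v : G.V), A.feat G ℓ v = s }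
/-- Guards of Presburger quantifiers: `E(x,y)`, `E(y,x)`, or `⊤`. -/
inductive MPGuard : Type
  | out | inc | top
deriving DecidableEq

mutual
  /-- Two-variable modal logic with Presburger quantifiers (`MP²`) over `n`
  unary predicates.  A Presburger quantifier `pres δ ts` asserts
  `Σₜ λₜ·#y[εₜ(x,y) ∧ φₜ(y)] ≥ δ`, where the finite sum of terms is
  represented by `ts : PresSum n`. -/
  inductive MP2 (n : ℕ) : Type
    | tru : MP2 n
    | unary (c : Fin n) : MP2 n
    | not (φ : MP2 n) : MP2 n
    | and (φ ψ : MP2 n) : MP2 n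
    | pres (δ : ℤ) (ts : PresSum n) : MP2 n

  /-- A finite list of terms `λ·#y[ε(x,y) ∧ φ(y)]` of a Presburger quantifier. -/
  inductive PresSum (n : ℕ) : Type
    | nil : PresSum n
    | cons (lam : ℤ) (g : MPGuard) (φ : MP2 n) (rest : PresSum n) : PresSum n
end

/-- Semantics of a guard at a pair of vertices. -/
def MPGuard.holds {n : ℕ} (G : NGraph n) : MPGuard → G.V → G.V → Bool
  | .out, v, u => G.E v u
  | .inc, v, u => G.E u v
  | .top, _, _ => true

mutual
  /-- Satisfaction of an `MP²` formula at a vertex of an `n`-graph. -/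
  def MP2.sat {n : ℕ} (G : NGraph n) : MP2 n → G.V → Bool
    | .tru, _ => true
    | .unary c, v => G.U c v
    | .not φ, v => ! φ.sat G v
    | .and φ ψ, v => φ.sat G v && ψ.sat G v
    | .pres δ ts, v => decide (δ ≤ ts.val G v)

  /-- The value `Σₜ λₜ·#y[εₜ(x,y) ∧ φₜ(y)]` at a vertex. -/
  def PresSum.val {n : ℕ} (G : NGraph n) : PresSum n → G.V → ℤ
    | .nil, _ => 0
    | .cons lam g φ rest, v =>
        lam * ((Finset.univ.filter fun u => g.holds G v u && φ.sat G u).card : ℤ)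
          + rest.val G v
end

mutual
  /-- A formula is local if it contains no `⊤` guard. -/
  def MP2.IsLocal {n : ℕ} : MP2 n → Prop
    | .tru => True
    | .unary _ => True
    | .not φ => φ.IsLocal
    | .and φ ψ => φ.IsLocal ∧ ψ.IsLocal
    | .pres _ ts => ts.IsLocal

  def PresSum.IsLocal {n : ℕ} : PresSum n → Prop
    | .nil => True
    | .cons _ g φ rest => g ≠ MPGuard.top ∧ φ.IsLocal ∧ rest.IsLocal
end

mutual
  /-- A formula is outgoing-only if it contains no `E(y,x)` guard. -/
  def MP2.IsOutgoingOnly {n : ℕ} : MP2 n → Prop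
    | .tru => True
    | .unary _ => True
    | .not φ => φ.IsOutgoingOnly
    | .and φ ψ => φ.IsOutgoingOnly ∧ ψ.IsOutgoingOnly
    | .pres _ ts => ts.IsOutgoingOnly

  def PresSum.IsOutgoingOnly {n : ℕ} : PresSum n → Prop
    | .nil => True
    | .cons _ g φ rest => g ≠ MPGuard.inc ∧ φ.IsOutgoingOnly ∧ rest.IsOutgoingOnly
end

/-- A GNN and an `MP²` formula are equivalent if they accept exactly the same
vertices of the same `n`-graphs. -/
def GNN.EquivMP2 {n : ℕ} (A : GNN n) (φ : MP2 n) : Prop :=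
  ∀ (G : NGraph n) (v : G.V), A.accepts G v ↔ φ.sat G v = true

/-! ### Auxiliary material -/

namespace MP2aux

variable {n : ℕ}

/-- Falsum. -/
def fls : MP2 n := .not .tru

@[simp] lemma sat_fls (G : NGraph n) (v : G.V) : (fls (n := n)).sat G v = false := by
  simp [fls, MP2.sat]

/-- Disjunction. -/
def orr (φ ψ : MP2 n) : MP2 n := .not ((MP2.not φ).and (.not ψ))

@[simp] lemma sat_orr (G : NGraph n) (v : G.V) (φ ψ : MP2 n) :
    (orr φ ψ).sat G v = (φ.sat G v || ψ.sat G v) := by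
  simp [orr, MP2.sat]

/-- Big disjunction. -/
def bigOr : List (MP2 n) → MP2 n
  | [] => fls
  | φ :: l => orr φ (bigOr l)

lemma sat_bigOr (G : NGraph n) (v : G.V) (l : List (MP2 n)) :
    (bigOr l).sat G v = true ↔ ∃ φ ∈ l, φ.sat G v = true := by
  induction l with
  | nil => simp [bigOr]
  | cons φ l ih => simp [bigOr, ih]

/-- Big conjunction. -/
def bigAnd : List (MP2 n) → MP2 n
  | [] => .tru
  | φ :: l => .and φ (bigAnd l)

lemma sat_bigAnd (G : NGraph n) (v : G.V) (l : List (MP2 n)) :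
    (bigAnd l).sat G v = true ↔ ∀ φ ∈ l, φ.sat G v = true := by
  induction l with
  | nil => simp [bigAnd, MP2.sat]
  | cons φ l ih => simp [bigAnd, MP2.sat, ih]

lemma isLocal_fls : (fls (n := n)).IsLocal := by
  simp [fls, MP2.IsLocal]

lemma isLocal_orr {φ ψ : MP2 n} (h1 : φ.IsLocal) (h2 : ψ.IsLocal) : (orr φ ψ).IsLocal := by
  simp [orr, MP2.IsLocal]; exact ⟨h1, h2⟩

lemma isLocal_bigOr {l : List (MP2 n)} (h : ∀ φ ∈ l, φ.IsLocal) : (bigOr l).IsLocal := by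
  induction l with
  | nil => exact isLocal_fls
  | cons φ l ih =>
    exact isLocal_orr (h φ (by simp)) (ih fun ψ hψ => h ψ (by simp [hψ]))

lemma isLocal_bigAnd {l : List (MP2 n)} (h : ∀ φ ∈ l, φ.IsLocal) : (bigAnd l).IsLocal := by
  induction l with
  | nil => simp [bigAnd, MP2.IsLocal]
  | cons φ l ih =>
    have : (bigAnd l).IsLocal := ih fun ψ hψ => h ψ (by simp [hψ])
    simpa [bigAnd, MP2.IsLocal] using ⟨h φ (by simp), this⟩

lemma isOut_fls : (fls (n := n)).IsOutgoingOnly := by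
  simp [fls, MP2.IsOutgoingOnly]

lemma isOut_orr {φ ψ : MP2 n} (h1 : φ.IsOutgoingOnly) (h2 : ψ.IsOutgoingOnly) :
    (orr φ ψ).IsOutgoingOnly := by
  simp [orr, MP2.IsOutgoingOnly]; exact ⟨h1, h2⟩

lemma isOut_bigOr {l : List (MP2 n)} (h : ∀ φ ∈ l, φ.IsOutgoingOnly) :
    (bigOr l).IsOutgoingOnly := by
  induction l with
  | nil => exact isOut_fls
  | cons φ l ih =>
    exact isOut_orr (h φ (by simp)) (ih fun ψ hψ => h ψ (by simp [hψ]))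

lemma isOut_bigAnd {l : List (MP2 n)} (h : ∀ φ ∈ l, φ.IsOutgoingOnly) :
    (bigAnd l).IsOutgoingOnly := by
  induction l with
  | nil => simp [bigAnd, MP2.IsOutgoingOnly]
  | cons φ l ih =>
    have : (bigAnd l).IsOutgoingOnly := ih fun ψ hψ => h ψ (by simp [hψ])
    simpa [bigAnd, MP2.IsOutgoingOnly] using ⟨h φ (by simp), this⟩

/-- Count of vertices satisfying a guarded formula. -/
def cnt (G : NGraph n) (g : MPGuard) (φ : MP2 n) (v : G.V) : ℤ :=
  ((Finset.univ.filter fun u => g.holds G v u && φ.sat G u).card : ℤ)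

/-- Build a Presburger sum from a list of terms, dropping zero coefficients. -/
def mkSum : List (ℤ × MPGuard × MP2 n) → PresSum n
  | [] => .nil
  | (lam, g, φ) :: l => if lam = 0 then mkSum l else .cons lam g φ (mkSum l)

lemma val_mkSum (G : NGraph n) (v : G.V) (l : List (ℤ × MPGuard × MP2 n)) :
    (mkSum l).val G v = (l.map fun t => t.1 * cnt G t.2.1 t.2.2 v).sum := by
  induction l with
  | nil => simp [mkSum, PresSum.val]
  | cons t l ih =>
    obtain ⟨lam, g, φ⟩ := t
    by_cases h : lam = 0
    · simp [mkSum, h, ih]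
    · simp [mkSum, h, PresSum.val, ih, cnt]

lemma isLocal_mkSum {l : List (ℤ × MPGuard × MP2 n)}
    (h : ∀ t ∈ l, t.1 = 0 ∨ (t.2.1 ≠ MPGuard.top ∧ t.2.2.IsLocal)) :
    (mkSum l).IsLocal := by
  induction l with
  | nil => simp [mkSum, PresSum.IsLocal]
  | cons t l ih =>
    obtain ⟨lam, g, φ⟩ := t
    have hrest : (mkSum l).IsLocal := ih fun s hs => h s (by simp [hs])
    by_cases hz : lam = 0
    · simpa [mkSum, hz] using hrest
    · have := h (lam, g, φ) (by simp)
      simp [hz] at this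
      simpa [mkSum, hz, PresSum.IsLocal] using ⟨this.1, this.2, hrest⟩

lemma isOut_mkSum {l : List (ℤ × MPGuard × MP2 n)}
    (h : ∀ t ∈ l, t.1 = 0 ∨ (t.2.1 ≠ MPGuard.inc ∧ t.2.2.IsOutgoingOnly)) :
    (mkSum l).IsOutgoingOnly := by
  induction l with
  | nil => simp [mkSum, PresSum.IsOutgoingOnly]
  | cons t l ih =>
    obtain ⟨lam, g, φ⟩ := t
    have hrest : (mkSum l).IsOutgoingOnly := ih fun s hs => h s (by simp [hs])
    by_cases hz : lam = 0
    · simpa [mkSum, hz] using hrest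
    · have := h (lam, g, φ) (by simp)
      simp [hz] at this
      simpa [mkSum, hz, PresSum.IsOutgoingOnly] using ⟨this.1, this.2, hrest⟩

/-- `≥ δ` atom. -/
def geAtom (δ : ℤ) (l : List (ℤ × MPGuard × MP2 n)) : MP2 n := .pres δ (mkSum l)

/-- `≤ δ` atom. -/
def leAtom (δ : ℤ) (l : List (ℤ × MPGuard × MP2 n)) : MP2 n := .not (geAtom (δ + 1) l)

/-- `= δ` atom. -/
def eqAtom (δ : ℤ) (l : List (ℤ × MPGuard × MP2 n)) : MP2 n :=
  .and (geAtom δ l) (leAtom δ l)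

lemma sat_geAtom (G : NGraph n) (v : G.V) (δ : ℤ) (l : List (ℤ × MPGuard × MP2 n)) :
    (geAtom δ l).sat G v = true ↔ δ ≤ (l.map fun t => t.1 * cnt G t.2.1 t.2.2 v).sum := by
  simp [geAtom, MP2.sat, val_mkSum]

lemma sat_leAtom (G : NGraph n) (v : G.V) (δ : ℤ) (l : List (ℤ × MPGuard × MP2 n)) :
    (leAtom δ l).sat G v = true ↔ (l.map fun t => t.1 * cnt G t.2.1 t.2.2 v).sum ≤ δ := by
  simp [leAtom, geAtom, MP2.sat, val_mkSum]

lemma sat_eqAtom (G : NGraph n) (v : G.V) (δ : ℤ) (l : List (ℤ × MPGuard × MP2 n)) :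
    (eqAtom δ l).sat G v = true ↔ (l.map fun t => t.1 * cnt G t.2.1 t.2.2 v).sum = δ := by
  simp only [eqAtom, leAtom, geAtom, MP2.sat, Bool.and_eq_true, val_mkSum, decide_eq_true_eq, Bool.not_eq_true', decide_eq_false_iff_not]
  omega

end MP2aux
namespace MP2aux

lemma exists_common_denom (Q : Finset ℚ) :
    ∃ D : ℕ, 0 < D ∧ ∀ q ∈ Q, ∃ z : ℤ, (z : ℚ) = (D : ℚ) * q := by
  classical
  induction Q using Finset.induction_on with
  | empty => exact ⟨1, one_pos, by simp⟩
  | @insert a Q ha ih =>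
    obtain ⟨D, hD, hQ⟩ := ih
    refine ⟨D * a.den, by positivity, ?_⟩
    intro q hq
    rcases Finset.mem_insert.mp hq with rfl | hq
    · refine ⟨(D : ℤ) * q.num, ?_⟩
      push_cast
      rw [mul_assoc, mul_comm (q.den : ℚ) q, Rat.mul_den_eq_num]
    · obtain ⟨z, hz⟩ := hQ q hq
      refine ⟨(a.den : ℤ) * z, ?_⟩
      push_cast
      rw [hz]; ring

variable {n : ℕ}

lemma sum_feat_eq (A : GNN n) (G : NGraph n) (ℓ : ℕ)
    (S : Finset (Fin (A.d ℓ) → ℚ)) (φ : (Fin (A.d ℓ) → ℚ) → MP2 n)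
    (hcov : ∀ u : G.V, A.feat G ℓ u ∈ S)
    (hchar : ∀ s ∈ S, ∀ u : G.V, ((φ s).sat G u = true ↔ A.feat G ℓ u = s))
    (p : G.V → Bool) (j : Fin (A.d ℓ)) :
    (∑ u ∈ Finset.univ.filter (fun u => p u = true), A.feat G ℓ u) j
      = ∑ s' ∈ S,
          (((Finset.univ.filter fun u => p u && (φ s').sat G u).card : ℚ) * s' j) := by
  classical
  have hpart := Finset.sum_fiberwise_of_maps_to
      (s := Finset.univ.filter (fun u => p u = true)) (t := S)
      (g := fun u => A.feat G ℓ u) (fun u _ => hcov u) (fun u => A.feat G ℓ u j)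
  rw [Finset.sum_apply, ← hpart]
  refine Finset.sum_congr rfl ?_
  intro s' hs'
  have hfil : (Finset.univ.filter fun u => p u && (φ s').sat G u)
      = (Finset.univ.filter (fun u => p u = true)).filter
          (fun u => A.feat G ℓ u = s') := by
    ext u
    simp [Finset.mem_filter, hchar s' hs' u]
  have : ∑ u ∈ (Finset.univ.filter (fun u => p u = true)).filter
        (fun u => A.feat G ℓ u = s'), A.feat G ℓ u j
      = ∑ _u ∈ (Finset.univ.filter (fun u => p u = true)).filter
        (fun u => A.feat G ℓ u = s'), s' j := by
    refine Finset.sum_congr rfl ?_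
    intro u hu
    rw [(Finset.mem_filter.mp hu).2]
  rw [this, Finset.sum_const, hfil, nsmul_eq_mul]

lemma mulVec_sum_feat (A : GNN n) (G : NGraph n) (ℓ : ℕ) {d' : ℕ}
    (M : Matrix (Fin d') (Fin (A.d ℓ)) ℚ)
    (S : Finset (Fin (A.d ℓ) → ℚ)) (φ : (Fin (A.d ℓ) → ℚ) → MP2 n)
    (hcov : ∀ u : G.V, A.feat G ℓ u ∈ S)
    (hchar : ∀ s ∈ S, ∀ u : G.V, ((φ s).sat G u = true ↔ A.feat G ℓ u = s))
    (p : G.V → Bool) (i : Fin d') :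
    M.mulVec (∑ u ∈ Finset.univ.filter (fun u => p u = true), A.feat G ℓ u) i
      = ∑ s' ∈ S,
          (((Finset.univ.filter fun u => p u && (φ s').sat G u).card : ℚ)
            * M.mulVec s' i) := by
  classical
  unfold Matrix.mulVec dotProduct
  have h := sum_feat_eq A G ℓ S φ hcov hchar p
  calc ∑ j, M i j * (∑ u ∈ Finset.univ.filter (fun u => p u = true), A.feat G ℓ u) j
      = ∑ j, M i j * ∑ s' ∈ S,
          (((Finset.univ.filter fun u => p u && (φ s').sat G u).card : ℚ) * s' j) := by
        refine Finset.sum_congr rfl fun j _ => by rw [h j]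
    _ = ∑ j, ∑ s' ∈ S, (((Finset.univ.filter fun u => p u && (φ s').sat G u).card : ℚ)
          * (M i j * s' j)) := by
        refine Finset.sum_congr rfl fun j _ => ?_
        rw [Finset.mul_sum]
        exact Finset.sum_congr rfl fun s' _ => by ring
    _ = ∑ s' ∈ S, (((Finset.univ.filter fun u => p u && (φ s').sat G u).card : ℚ)
          * ∑ j, M i j * s' j) := by
        rw [Finset.sum_comm]
        exact Finset.sum_congr rfl fun s' _ => by rw [Finset.mul_sum]

end MP2aux
namespace MP2aux

lemma num_cast_eq {x : ℚ} (h : ∃ z : ℤ, (z : ℚ) = x) : (x.num : ℚ) = x := by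
  obtain ⟨z, rfl⟩ := h; simp

lemma list_sum_toList {M α : Type} [AddCommMonoid M] (s : Finset α) (f : α → M) :
    (s.toList.map f).sum = ∑ a ∈ s, f a := by
  rw [← Multiset.sum_coe, ← Multiset.map_coe, Finset.coe_toList]
  rfl

lemma list_sum_flatMap {M α β : Type} [AddCommMonoid M] (g : β → M) (l : List α)
    (f : α → List β) :
    ((l.flatMap f).map g).sum = (l.map fun a => ((f a).map g).sum).sum := by
  induction l with
  | nil => simp
  | cons a l ih => simp [ih]

variable {n : ℕ}

/-- Coefficient of the outgoing count, scaled by `D`. -/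
def lamOut (A : GNN n) (ℓ : ℕ) (D : ℕ) (s' : Fin (A.d ℓ) → ℚ) (i : Fin (A.d (ℓ+1))) : ℤ :=
  ((D : ℚ) * (A.Aout ℓ).mulVec s' i).num

def lamIn (A : GNN n) (ℓ : ℕ) (D : ℕ) (s' : Fin (A.d ℓ) → ℚ) (i : Fin (A.d (ℓ+1))) : ℤ :=
  ((D : ℚ) * (A.Ain ℓ).mulVec s' i).num

def lamTop (A : GNN n) (ℓ : ℕ) (D : ℕ) (s' : Fin (A.d ℓ) → ℚ) (i : Fin (A.d (ℓ+1))) : ℤ :=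
  ((D : ℚ) * (A.R ℓ).mulVec s' i).num

/-- The terms of the Presburger sum computing `D · (preactivation − c)`. -/
noncomputable def terms (A : GNN n) (ℓ : ℕ) (S : Finset (Fin (A.d ℓ) → ℚ))
    (φ : (Fin (A.d ℓ) → ℚ) → MP2 n) (D : ℕ) (i : Fin (A.d (ℓ+1))) :
    List (ℤ × MPGuard × MP2 n) :=
  S.toList.flatMap fun s' =>
    [(lamOut A ℓ D s' i, MPGuard.out, φ s'),
     (lamIn A ℓ D s' i, MPGuard.inc, φ s'),
     (lamTop A ℓ D s' i, MPGuard.top, φ s')]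

/-- The constant part of the preactivation. -/
def cval (A : GNN n) (ℓ : ℕ) (s : Fin (A.d ℓ) → ℚ) (i : Fin (A.d (ℓ+1))) : ℚ :=
  (A.C ℓ).mulVec s i + A.b ℓ i

/-- The value of the Presburger sum at a vertex. -/
noncomputable def Mval (A : GNN n) (ℓ : ℕ) (S : Finset (Fin (A.d ℓ) → ℚ))
    (φ : (Fin (A.d ℓ) → ℚ) → MP2 n) (D : ℕ) (i : Fin (A.d (ℓ+1)))
    (G : NGraph n) (v : G.V) : ℤ :=
  ((terms A ℓ S φ D i).map fun t => t.1 * cnt G t.2.1 t.2.2 v).sum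

lemma feat_succ_eq (A : GNN n) (ℓ : ℕ) (S : Finset (Fin (A.d ℓ) → ℚ))
    (φ : (Fin (A.d ℓ) → ℚ) → MP2 n) (D : ℕ) (G : NGraph n)
    (hcov : ∀ u : G.V, A.feat G ℓ u ∈ S)
    (hchar : ∀ s ∈ S, ∀ u : G.V, ((φ s).sat G u = true ↔ A.feat G ℓ u = s))
    (hDpos : 0 < D)
    (hDout : ∀ s' ∈ S, ∀ i, ((lamOut A ℓ D s' i : ℚ)) = (D : ℚ) * (A.Aout ℓ).mulVec s' i)
    (hDin : ∀ s' ∈ S, ∀ i, ((lamIn A ℓ D s' i : ℚ)) = (D : ℚ) * (A.Ain ℓ).mulVec s' i)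
    (hDtop : ∀ s' ∈ S, ∀ i, ((lamTop A ℓ D s' i : ℚ)) = (D : ℚ) * (A.R ℓ).mulVec s' i)
    (v : G.V) (i : Fin (A.d (ℓ+1))) :
    A.feat G (ℓ+1) v i
      = A.act ℓ (cval A ℓ (A.feat G ℓ v) i + ((Mval A ℓ S φ D i G v : ℚ)) / D) := by
  classical
  have hD0 : ((D : ℚ)) ≠ 0 := by positivity
  -- abbreviations for counts
  set Nout : (Fin (A.d ℓ) → ℚ) → ℕ := fun s' =>
    (Finset.univ.filter fun u => G.E v u && (φ s').sat G u).card with hNout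
  set Nin : (Fin (A.d ℓ) → ℚ) → ℕ := fun s' =>
    (Finset.univ.filter fun u => G.E u v && (φ s').sat G u).card with hNin
  set Nall : (Fin (A.d ℓ) → ℚ) → ℕ := fun s' =>
    (Finset.univ.filter fun u => true && (φ s').sat G u).card with hNall
  -- step A : the three aggregated terms
  have hA : (A.Aout ℓ).mulVec (∑ u ∈ Finset.univ.filter (fun u => G.E v u), A.feat G ℓ u) i
      = ∑ s' ∈ S, ((Nout s' : ℚ) * (A.Aout ℓ).mulVec s' i) :=
    mulVec_sum_feat A G ℓ (A.Aout ℓ) S φ hcov hchar (fun u => G.E v u) i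
  have hB : (A.Ain ℓ).mulVec (∑ u ∈ Finset.univ.filter (fun u => G.E u v), A.feat G ℓ u) i
      = ∑ s' ∈ S, ((Nin s' : ℚ) * (A.Ain ℓ).mulVec s' i) :=
    mulVec_sum_feat A G ℓ (A.Ain ℓ) S φ hcov hchar (fun u => G.E u v) i
  have huniv : (Finset.univ : Finset G.V)
      = Finset.univ.filter (fun u => (fun _ : G.V => true) u = true) := by simp
  have hC : (A.R ℓ).mulVec (∑ u, A.feat G ℓ u) i
      = ∑ s' ∈ S, ((Nall s' : ℚ) * (A.R ℓ).mulVec s' i) := by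
    rw [huniv]
    exact mulVec_sum_feat A G ℓ (A.R ℓ) S φ hcov hchar (fun _ => true) i
  -- the value of M
  have hM : ((Mval A ℓ S φ D i G v : ℚ))
      = ∑ s' ∈ S, (((lamOut A ℓ D s' i : ℚ)) * (Nout s' : ℚ)
          + ((lamIn A ℓ D s' i : ℚ)) * (Nin s' : ℚ)
          + ((lamTop A ℓ D s' i : ℚ)) * (Nall s' : ℚ)) := by
    rw [Mval, terms, list_sum_flatMap, list_sum_toList]
    push_cast
    refine Finset.sum_congr rfl fun s' _ => ?_
    simp only [List.map_cons, List.map_nil, List.sum_cons, List.sum_nil, add_zero]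
    rw [cnt, cnt, cnt]
    have h1 : (Finset.univ.filter fun u => MPGuard.holds G .out v u && (φ s').sat G u)
        = Finset.univ.filter fun u => G.E v u && (φ s').sat G u := rfl
    have h2 : (Finset.univ.filter fun u => MPGuard.holds G .inc v u && (φ s').sat G u)
        = Finset.univ.filter fun u => G.E u v && (φ s').sat G u := rfl
    have h3 : (Finset.univ.filter fun u => MPGuard.holds G .top v u && (φ s').sat G u)
        = Finset.univ.filter fun u => true && (φ s').sat G u := rfl
    rw [h1, h2, h3]
    push_cast
    ring
  have hM2 : ((Mval A ℓ S φ D i G v : ℚ))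
      = (D : ℚ) * (∑ s' ∈ S, ((Nout s' : ℚ) * (A.Aout ℓ).mulVec s' i)
          + ∑ s' ∈ S, ((Nin s' : ℚ) * (A.Ain ℓ).mulVec s' i)
          + ∑ s' ∈ S, ((Nall s' : ℚ) * (A.R ℓ).mulVec s' i)) := by
    rw [hM, mul_add, mul_add, Finset.mul_sum, Finset.mul_sum, Finset.mul_sum,
      ← Finset.sum_add_distrib, ← Finset.sum_add_distrib]
    refine Finset.sum_congr rfl fun s' hs' => ?_
    rw [hDout s' hs', hDin s' hs', hDtop s' hs']
    ring
  -- unfold feat at level ℓ+1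
  show A.act ℓ _ = _
  congr 1
  rw [hA, hB, hC, cval]
  rw [hM2]
  field_simp
  ring

end MP2aux
namespace MP2aux

variable {n : ℕ}

def mLv (A : GNN n) (ℓ : ℕ) (D : ℕ) (tl : ℚ) (s : Fin (A.d ℓ) → ℚ) (i : Fin (A.d (ℓ+1))) : ℤ :=
  ⌊(D : ℚ) * (tl - cval A ℓ s i)⌋

def mRv (A : GNN n) (ℓ : ℕ) (D : ℕ) (tr : ℚ) (s : Fin (A.d ℓ) → ℚ) (i : Fin (A.d (ℓ+1))) : ℤ :=
  ⌈(D : ℚ) * (tr - cval A ℓ s i)⌉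

noncomputable def psiList (A : GNN n) (ℓ : ℕ) (S : Finset (Fin (A.d ℓ) → ℚ))
    (φ : (Fin (A.d ℓ) → ℚ) → MP2 n) (D : ℕ) (tl tr : ℚ)
    (s : Fin (A.d ℓ) → ℚ) (i : Fin (A.d (ℓ+1))) (w : ℚ) : List (MP2 n) :=
  (if A.act ℓ tl = w then [leAtom (mLv A ℓ D tl s i) (terms A ℓ S φ D i)] else []) ++
  (if A.act ℓ tr = w then [geAtom (mRv A ℓ D tr s i) (terms A ℓ S φ D i)] else []) ++
  ((Finset.Icc (mLv A ℓ D tl s i + 1) (mRv A ℓ D tr s i - 1)).toList.filterMap fun (m : ℤ) =>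
    if A.act ℓ (cval A ℓ s i + (m : ℚ) / D) = w then some (eqAtom m (terms A ℓ S φ D i))
    else none)

noncomputable def psi (A : GNN n) (ℓ : ℕ) (S : Finset (Fin (A.d ℓ) → ℚ))
    (φ : (Fin (A.d ℓ) → ℚ) → MP2 n) (D : ℕ) (tl tr : ℚ)
    (s : Fin (A.d ℓ) → ℚ) (i : Fin (A.d (ℓ+1))) (w : ℚ) : MP2 n :=
  bigOr (psiList A ℓ S φ D tl tr s i w)

noncomputable def Wset (A : GNN n) (ℓ : ℕ) (D : ℕ) (tl tr : ℚ)
    (s : Fin (A.d ℓ) → ℚ) (i : Fin (A.d (ℓ+1))) : Finset ℚ :=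
  insert (A.act ℓ tl) (insert (A.act ℓ tr)
    ((Finset.Icc (mLv A ℓ D tl s i + 1) (mRv A ℓ D tr s i - 1)).image fun (m : ℤ) =>
      A.act ℓ (cval A ℓ s i + (m : ℚ) / D)))

section main

variable (A : GNN n) (ℓ : ℕ) (S : Finset (Fin (A.d ℓ) → ℚ))
  (φ : (Fin (A.d ℓ) → ℚ) → MP2 n) (D : ℕ) (tl tr : ℚ) (G : NGraph n)

-- the three key numeric equivalences
lemma le_tl_iff (hDpos : 0 < D) (s : Fin (A.d ℓ) → ℚ) (i : Fin (A.d (ℓ+1))) (M : ℤ) :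
    cval A ℓ s i + (M : ℚ) / D ≤ tl ↔ M ≤ mLv A ℓ D tl s i := by
  have hD : (0 : ℚ) < D := by positivity
  rw [mLv, Int.le_floor]
  rw [mul_comm, ← div_le_iff₀ hD]
  constructor <;> intro h <;> linarith [h]

lemma ge_tr_iff (hDpos : 0 < D) (s : Fin (A.d ℓ) → ℚ) (i : Fin (A.d (ℓ+1))) (M : ℤ) :
    tr ≤ cval A ℓ s i + (M : ℚ) / D ↔ mRv A ℓ D tr s i ≤ M := by
  have hD : (0 : ℚ) < D := by positivity
  rw [mRv, Int.ceil_le]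
  rw [mul_comm, ← le_div_iff₀ hD]
  constructor <;> intro h <;> linarith [h]

lemma eq_grid_iff (hDpos : 0 < D) (s : Fin (A.d ℓ) → ℚ) (i : Fin (A.d (ℓ+1))) (M m : ℤ) :
    cval A ℓ s i + (M : ℚ) / D = cval A ℓ s i + (m : ℚ) / D ↔ M = m := by
  have hD : ((D : ℚ)) ≠ 0 := by positivity
  rw [add_right_inj, div_eq_div_iff hD hD]
  constructor
  · intro h
    exact_mod_cast mul_right_cancel₀ hD h
  · rintro rfl
    rfl

lemma sat_psi (hcov : ∀ u : G.V, A.feat G ℓ u ∈ S)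
    (hchar : ∀ s ∈ S, ∀ u : G.V, ((φ s).sat G u = true ↔ A.feat G ℓ u = s))
    (hDpos : 0 < D)
    (hDout : ∀ s' ∈ S, ∀ i, ((lamOut A ℓ D s' i : ℚ)) = (D : ℚ) * (A.Aout ℓ).mulVec s' i)
    (hDin : ∀ s' ∈ S, ∀ i, ((lamIn A ℓ D s' i : ℚ)) = (D : ℚ) * (A.Ain ℓ).mulVec s' i)
    (hDtop : ∀ s' ∈ S, ∀ i, ((lamTop A ℓ D s' i : ℚ)) = (D : ℚ) * (A.R ℓ).mulVec s' i)
    (htl : ∀ x ≤ tl, A.act ℓ x = A.act ℓ tl) (htr : ∀ x ≥ tr, A.act ℓ x = A.act ℓ tr)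
    (htlr : tl < tr)
    (v : G.V) (i : Fin (A.d (ℓ+1))) (w : ℚ) :
    (psi A ℓ S φ D tl tr (A.feat G ℓ v) i w).sat G v = true ↔ A.feat G (ℓ+1) v i = w := by
  classical
  set s := A.feat G ℓ v with hs
  set M := Mval A ℓ S φ D i G v with hMdef
  set x := cval A ℓ s i + (M : ℚ) / D with hx
  have hfeat : A.feat G (ℓ+1) v i = A.act ℓ x :=
    feat_succ_eq A ℓ S φ D G hcov hchar hDpos hDout hDin hDtop v i
  have hMsum : ((terms A ℓ S φ D i).map fun t => t.1 * cnt G t.2.1 t.2.2 v).sum = M := rfl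
  rw [hfeat, psi, sat_bigOr]
  constructor
  · rintro ⟨ψ, hmem, hsat⟩
    rw [psiList] at hmem
    simp only [List.mem_append, List.mem_filterMap, Finset.mem_toList, Finset.mem_Icc] at hmem
    rcases hmem with (hmem | hmem) | hmem
    · split_ifs at hmem with hw
      · simp only [List.mem_singleton] at hmem
        subst hmem
        rw [sat_leAtom, hMsum] at hsat
        rw [← hw]
        exact htl x ((le_tl_iff A ℓ D tl hDpos s i M).mpr hsat)
      · simp at hmem
    · split_ifs at hmem with hw
      · simp only [List.mem_singleton] at hmem
        subst hmem
        rw [sat_geAtom, hMsum] at hsat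
        rw [← hw]
        exact htr x ((ge_tr_iff A ℓ D tr hDpos s i M).mpr hsat)
      · simp at hmem
    · obtain ⟨m, hmIcc, hmi⟩ := hmem
      rw [Option.ite_none_right_eq_some, Option.some_inj] at hmi
      obtain ⟨hw, rfl⟩ := hmi
      rw [sat_eqAtom, hMsum] at hsat
      rw [← hw]
      congr 1
      rw [hx, hsat]
  · intro hw
    by_cases h1 : M ≤ mLv A ℓ D tl s i
    · have hxtl : x ≤ tl := (le_tl_iff A ℓ D tl hDpos s i M).mpr h1
      have hw' : A.act ℓ tl = w := by rw [← htl x hxtl, hw]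
      refine ⟨leAtom (mLv A ℓ D tl s i) (terms A ℓ S φ D i), ?_, ?_⟩
      · rw [psiList]
        simp only [List.mem_append]
        left; left
        rw [if_pos hw']
        simp
      · rw [sat_leAtom, hMsum]; exact h1
    · by_cases h2 : mRv A ℓ D tr s i ≤ M
      · have hxtr : tr ≤ x := (ge_tr_iff A ℓ D tr hDpos s i M).mpr h2
        have hw' : A.act ℓ tr = w := by rw [← htr x hxtr, hw]
        refine ⟨geAtom (mRv A ℓ D tr s i) (terms A ℓ S φ D i), ?_, ?_⟩
        · rw [psiList]
          simp only [List.mem_append]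
          left; right
          rw [if_pos hw']
          simp
        · rw [sat_geAtom, hMsum]; exact h2
      · have hw' : A.act ℓ (cval A ℓ s i + (M : ℚ) / D) = w := hw
        refine ⟨eqAtom M (terms A ℓ S φ D i), ?_, ?_⟩
        · rw [psiList]
          simp only [List.mem_append, List.mem_filterMap, Finset.mem_toList, Finset.mem_Icc]
          right
          exact ⟨M, ⟨by omega, by omega⟩, by rw [if_pos hw']⟩
        · rw [sat_eqAtom, hMsum]

lemma feat_mem_Wset (hcov : ∀ u : G.V, A.feat G ℓ u ∈ S)
    (hchar : ∀ s ∈ S, ∀ u : G.V, ((φ s).sat G u = true ↔ A.feat G ℓ u = s))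
    (hDpos : 0 < D)
    (hDout : ∀ s' ∈ S, ∀ i, ((lamOut A ℓ D s' i : ℚ)) = (D : ℚ) * (A.Aout ℓ).mulVec s' i)
    (hDin : ∀ s' ∈ S, ∀ i, ((lamIn A ℓ D s' i : ℚ)) = (D : ℚ) * (A.Ain ℓ).mulVec s' i)
    (hDtop : ∀ s' ∈ S, ∀ i, ((lamTop A ℓ D s' i : ℚ)) = (D : ℚ) * (A.R ℓ).mulVec s' i)
    (htl : ∀ x ≤ tl, A.act ℓ x = A.act ℓ tl) (htr : ∀ x ≥ tr, A.act ℓ x = A.act ℓ tr)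
    (v : G.V) (i : Fin (A.d (ℓ+1))) :
    A.feat G (ℓ+1) v i ∈ Wset A ℓ D tl tr (A.feat G ℓ v) i := by
  classical
  set s := A.feat G ℓ v with hs
  set M := Mval A ℓ S φ D i G v with hMdef
  set x := cval A ℓ s i + (M : ℚ) / D with hx
  have hfeat : A.feat G (ℓ+1) v i = A.act ℓ x :=
    feat_succ_eq A ℓ S φ D G hcov hchar hDpos hDout hDin hDtop v i
  rw [hfeat, Wset]
  by_cases h1 : M ≤ mLv A ℓ D tl s i
  · rw [htl x ((le_tl_iff A ℓ D tl hDpos s i M).mpr h1)]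
    exact Finset.mem_insert_self _ _
  · by_cases h2 : mRv A ℓ D tr s i ≤ M
    · rw [htr x ((ge_tr_iff A ℓ D tr hDpos s i M).mpr h2)]
      exact Finset.mem_insert_of_mem (Finset.mem_insert_self _ _)
    · refine Finset.mem_insert_of_mem (Finset.mem_insert_of_mem ?_)
      exact Finset.mem_image.mpr ⟨M, Finset.mem_Icc.mpr ⟨by omega, by omega⟩, rfl⟩

end main
end MP2aux
namespace MP2aux

variable {n : ℕ}

noncomputable def Snext (A : GNN n) (ℓ : ℕ) (S : Finset (Fin (A.d ℓ) → ℚ)) (D : ℕ)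
    (tl tr : ℚ) : Finset (Fin (A.d (ℓ+1)) → ℚ) :=
  S.biUnion fun s => Fintype.piFinset fun i => Wset A ℓ D tl tr s i

noncomputable def phiNext (A : GNN n) (ℓ : ℕ) (S : Finset (Fin (A.d ℓ) → ℚ))
    (φ : (Fin (A.d ℓ) → ℚ) → MP2 n) (D : ℕ) (tl tr : ℚ)
    (t : Fin (A.d (ℓ+1)) → ℚ) : MP2 n :=
  bigOr (S.toList.map fun s => .and (φ s)
    (bigAnd ((List.finRange (A.d (ℓ+1))).map fun i => psi A ℓ S φ D tl tr s i (t i))))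

section main2

variable (A : GNN n) (ℓ : ℕ) (S : Finset (Fin (A.d ℓ) → ℚ))
  (φ : (Fin (A.d ℓ) → ℚ) → MP2 n) (D : ℕ) (tl tr : ℚ) (G : NGraph n)

lemma feat_mem_Snext (hcov : ∀ u : G.V, A.feat G ℓ u ∈ S)
    (hchar : ∀ s ∈ S, ∀ u : G.V, ((φ s).sat G u = true ↔ A.feat G ℓ u = s))
    (hDpos : 0 < D)
    (hDout : ∀ s' ∈ S, ∀ i, ((lamOut A ℓ D s' i : ℚ)) = (D : ℚ) * (A.Aout ℓ).mulVec s' i)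
    (hDin : ∀ s' ∈ S, ∀ i, ((lamIn A ℓ D s' i : ℚ)) = (D : ℚ) * (A.Ain ℓ).mulVec s' i)
    (hDtop : ∀ s' ∈ S, ∀ i, ((lamTop A ℓ D s' i : ℚ)) = (D : ℚ) * (A.R ℓ).mulVec s' i)
    (htl : ∀ x ≤ tl, A.act ℓ x = A.act ℓ tl) (htr : ∀ x ≥ tr, A.act ℓ x = A.act ℓ tr)
    (v : G.V) : A.feat G (ℓ+1) v ∈ Snext A ℓ S D tl tr := by
  classical
  rw [Snext, Finset.mem_biUnion]
  refine ⟨A.feat G ℓ v, hcov v, Fintype.mem_piFinset.mpr fun i => ?_⟩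
  exact feat_mem_Wset A ℓ S φ D tl tr G hcov hchar hDpos hDout hDin hDtop htl htr v i

lemma sat_phiNext (hcov : ∀ u : G.V, A.feat G ℓ u ∈ S)
    (hchar : ∀ s ∈ S, ∀ u : G.V, ((φ s).sat G u = true ↔ A.feat G ℓ u = s))
    (hDpos : 0 < D)
    (hDout : ∀ s' ∈ S, ∀ i, ((lamOut A ℓ D s' i : ℚ)) = (D : ℚ) * (A.Aout ℓ).mulVec s' i)
    (hDin : ∀ s' ∈ S, ∀ i, ((lamIn A ℓ D s' i : ℚ)) = (D : ℚ) * (A.Ain ℓ).mulVec s' i)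
    (hDtop : ∀ s' ∈ S, ∀ i, ((lamTop A ℓ D s' i : ℚ)) = (D : ℚ) * (A.R ℓ).mulVec s' i)
    (htl : ∀ x ≤ tl, A.act ℓ x = A.act ℓ tl) (htr : ∀ x ≥ tr, A.act ℓ x = A.act ℓ tr)
    (htlr : tl < tr)
    (v : G.V) (t : Fin (A.d (ℓ+1)) → ℚ) :
    (phiNext A ℓ S φ D tl tr t).sat G v = true ↔ A.feat G (ℓ+1) v = t := by
  classical
  rw [phiNext, sat_bigOr]
  constructor
  · rintro ⟨ψ, hmem, hsat⟩
    obtain ⟨s, hsS, rfl⟩ := List.mem_map.mp hmem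
    simp only [MP2.sat, Bool.and_eq_true] at hsat
    obtain ⟨hsat1, hsat2⟩ := hsat
    have hs : A.feat G ℓ v = s := (hchar s (Finset.mem_toList.mp hsS) v).mp hsat1
    funext i
    have := (sat_bigAnd G v _).mp hsat2 (psi A ℓ S φ D tl tr s i (t i))
      (List.mem_map.mpr ⟨i, List.mem_finRange i, rfl⟩)
    rw [← hs] at this
    exact (sat_psi A ℓ S φ D tl tr G hcov hchar hDpos hDout hDin hDtop htl htr htlr
      v i (t i)).mp this
  · intro ht
    refine ⟨_, List.mem_map.mpr ⟨A.feat G ℓ v, Finset.mem_toList.mpr (hcov v), rfl⟩, ?_⟩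
    simp only [MP2.sat, Bool.and_eq_true]
    refine ⟨(hchar _ (hcov v) v).mpr rfl, (sat_bigAnd G v _).mpr ?_⟩
    intro ψ hψ
    obtain ⟨i, -, rfl⟩ := List.mem_map.mp hψ
    exact (sat_psi A ℓ S φ D tl tr G hcov hchar hDpos hDout hDin hDtop htl htr htlr
      v i (t i)).mpr (congrFun ht i)

/-! ### Locality -/

lemma isLocal_geAtom {δ : ℤ} {l : List (ℤ × MPGuard × MP2 n)}
    (h : ∀ t ∈ l, t.1 = 0 ∨ (t.2.1 ≠ MPGuard.top ∧ t.2.2.IsLocal)) :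
    (geAtom δ l).IsLocal := by
  exact isLocal_mkSum h

lemma isLocal_leAtom {δ : ℤ} {l : List (ℤ × MPGuard × MP2 n)}
    (h : ∀ t ∈ l, t.1 = 0 ∨ (t.2.1 ≠ MPGuard.top ∧ t.2.2.IsLocal)) :
    (leAtom δ l).IsLocal := by
  exact isLocal_geAtom (δ := δ + 1) h

lemma isLocal_eqAtom {δ : ℤ} {l : List (ℤ × MPGuard × MP2 n)}
    (h : ∀ t ∈ l, t.1 = 0 ∨ (t.2.1 ≠ MPGuard.top ∧ t.2.2.IsLocal)) :
    (eqAtom δ l).IsLocal := by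
  exact ⟨isLocal_geAtom (δ := δ) h, isLocal_leAtom (δ := δ) h⟩

lemma isOut_geAtom {δ : ℤ} {l : List (ℤ × MPGuard × MP2 n)}
    (h : ∀ t ∈ l, t.1 = 0 ∨ (t.2.1 ≠ MPGuard.inc ∧ t.2.2.IsOutgoingOnly)) :
    (geAtom δ l).IsOutgoingOnly := by
  exact isOut_mkSum h

lemma isOut_leAtom {δ : ℤ} {l : List (ℤ × MPGuard × MP2 n)}
    (h : ∀ t ∈ l, t.1 = 0 ∨ (t.2.1 ≠ MPGuard.inc ∧ t.2.2.IsOutgoingOnly)) :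
    (leAtom δ l).IsOutgoingOnly := by
  exact isOut_geAtom (δ := δ + 1) h

lemma isOut_eqAtom {δ : ℤ} {l : List (ℤ × MPGuard × MP2 n)}
    (h : ∀ t ∈ l, t.1 = 0 ∨ (t.2.1 ≠ MPGuard.inc ∧ t.2.2.IsOutgoingOnly)) :
    (eqAtom δ l).IsOutgoingOnly := by
  exact ⟨isOut_geAtom (δ := δ) h, isOut_leAtom (δ := δ) h⟩

lemma terms_cond_local (hR : A.R ℓ = 0) (hφ : ∀ s' ∈ S, (φ s').IsLocal)
    (i : Fin (A.d (ℓ+1))) :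
    ∀ t ∈ terms A ℓ S φ D i, t.1 = 0 ∨ (t.2.1 ≠ MPGuard.top ∧ t.2.2.IsLocal) := by
  intro t ht
  rw [terms] at ht
  obtain ⟨s', hs', hmem⟩ := List.mem_flatMap.mp ht
  have hs'S : s' ∈ S := Finset.mem_toList.mp hs'
  simp only [List.mem_cons, List.mem_singleton, List.not_mem_nil, or_false] at hmem
  rcases hmem with rfl | rfl | rfl
  · exact Or.inr ⟨by simp, hφ s' hs'S⟩
  · exact Or.inr ⟨by simp, hφ s' hs'S⟩
  · left
    simp [lamTop, hR, Matrix.zero_mulVec]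

lemma terms_cond_out (hAin : A.Ain ℓ = 0) (hφ : ∀ s' ∈ S, (φ s').IsOutgoingOnly)
    (i : Fin (A.d (ℓ+1))) :
    ∀ t ∈ terms A ℓ S φ D i, t.1 = 0 ∨ (t.2.1 ≠ MPGuard.inc ∧ t.2.2.IsOutgoingOnly) := by
  intro t ht
  rw [terms] at ht
  obtain ⟨s', hs', hmem⟩ := List.mem_flatMap.mp ht
  have hs'S : s' ∈ S := Finset.mem_toList.mp hs'
  simp only [List.mem_cons, List.mem_singleton, List.not_mem_nil, or_false] at hmem
  rcases hmem with rfl | rfl | rfl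
  · exact Or.inr ⟨by simp, hφ s' hs'S⟩
  · left
    simp [lamIn, hAin, Matrix.zero_mulVec]
  · exact Or.inr ⟨by simp, hφ s' hs'S⟩

lemma psi_local (hR : A.R ℓ = 0) (hφ : ∀ s' ∈ S, (φ s').IsLocal)
    (s : Fin (A.d ℓ) → ℚ) (i : Fin (A.d (ℓ+1))) (w : ℚ) :
    (psi A ℓ S φ D tl tr s i w).IsLocal := by
  classical
  refine isLocal_bigOr fun ψ hψ => ?_
  rw [psiList] at hψ
  simp only [List.mem_append, List.mem_filterMap, Finset.mem_toList] at hψ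
  have hc := terms_cond_local A ℓ S φ D hR hφ i
  rcases hψ with (hψ | hψ) | hψ
  · split_ifs at hψ with hw
    · simp only [List.mem_singleton] at hψ
      subst hψ; exact isLocal_leAtom hc
    · simp at hψ
  · split_ifs at hψ with hw
    · simp only [List.mem_singleton] at hψ
      subst hψ; exact isLocal_geAtom hc
    · simp at hψ
  · obtain ⟨m, -, hm⟩ := hψ
    rw [Option.ite_none_right_eq_some, Option.some_inj] at hm
    obtain ⟨-, rfl⟩ := hm
    exact isLocal_eqAtom hc

lemma psi_out (hAin : A.Ain ℓ = 0) (hφ : ∀ s' ∈ S, (φ s').IsOutgoingOnly)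
    (s : Fin (A.d ℓ) → ℚ) (i : Fin (A.d (ℓ+1))) (w : ℚ) :
    (psi A ℓ S φ D tl tr s i w).IsOutgoingOnly := by
  classical
  refine isOut_bigOr fun ψ hψ => ?_
  rw [psiList] at hψ
  simp only [List.mem_append, List.mem_filterMap, Finset.mem_toList] at hψ
  have hc := terms_cond_out A ℓ S φ D hAin hφ i
  rcases hψ with (hψ | hψ) | hψ
  · split_ifs at hψ with hw
    · simp only [List.mem_singleton] at hψ
      subst hψ; exact isOut_leAtom hc
    · simp at hψ
  · split_ifs at hψ with hw
    · simp only [List.mem_singleton] at hψ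
      subst hψ; exact isOut_geAtom hc
    · simp at hψ
  · obtain ⟨m, -, hm⟩ := hψ
    rw [Option.ite_none_right_eq_some, Option.some_inj] at hm
    obtain ⟨-, rfl⟩ := hm
    exact isOut_eqAtom hc

lemma phiNext_local (hR : A.R ℓ = 0) (hφ : ∀ s' ∈ S, (φ s').IsLocal)
    (t : Fin (A.d (ℓ+1)) → ℚ) : (phiNext A ℓ S φ D tl tr t).IsLocal := by
  refine isLocal_bigOr fun ψ hψ => ?_
  obtain ⟨s, hsS, rfl⟩ := List.mem_map.mp hψ
  have h1 : (φ s).IsLocal := hφ s (Finset.mem_toList.mp hsS)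
  have h2 : (bigAnd ((List.finRange (A.d (ℓ+1))).map fun i =>
      psi A ℓ S φ D tl tr s i (t i))).IsLocal := by
    refine isLocal_bigAnd fun χ hχ => ?_
    obtain ⟨i, -, rfl⟩ := List.mem_map.mp hχ
    exact psi_local A ℓ S φ D tl tr hR hφ s i (t i)
  exact ⟨h1, h2⟩

lemma phiNext_out (hAin : A.Ain ℓ = 0) (hφ : ∀ s' ∈ S, (φ s').IsOutgoingOnly)
    (t : Fin (A.d (ℓ+1)) → ℚ) : (phiNext A ℓ S φ D tl tr t).IsOutgoingOnly := by
  refine isOut_bigOr fun ψ hψ => ?_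
  obtain ⟨s, hsS, rfl⟩ := List.mem_map.mp hψ
  have h1 : (φ s).IsOutgoingOnly := hφ s (Finset.mem_toList.mp hsS)
  have h2 : (bigAnd ((List.finRange (A.d (ℓ+1))).map fun i =>
      psi A ℓ S φ D tl tr s i (t i))).IsOutgoingOnly := by
    refine isOut_bigAnd fun χ hχ => ?_
    obtain ⟨i, -, rfl⟩ := List.mem_map.mp hχ
    exact psi_out A ℓ S φ D tl tr hAin hφ s i (t i)
  exact ⟨h1, h2⟩

end main2
end MP2aux
namespace MP2aux

variable {n : ℕ}

lemma key (A : GNN n) (hec : ∀ ℓ < A.L, EventuallyConstant (A.act ℓ)) :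
    ∀ ℓ, ℓ ≤ A.L →
      ∃ (S : Finset (Fin (A.d ℓ) → ℚ)) (φ : (Fin (A.d ℓ) → ℚ) → MP2 n),
        (∀ (G : NGraph n) (u : G.V), A.feat G ℓ u ∈ S) ∧
        (∀ s ∈ S, ∀ (G : NGraph n) (u : G.V), ((φ s).sat G u = true ↔ A.feat G ℓ u = s)) ∧
        (A.IsLocal → ∀ s ∈ S, (φ s).IsLocal) ∧
        (A.IsOutgoingOnly → ∀ s ∈ S, (φ s).IsOutgoingOnly) := by
  intro ℓ
  induction ℓ with
  | zero =>
    intro _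
    classical
    refine ⟨Finset.univ.image (fun b : Fin (A.d 0) → Bool =>
        fun i => if b i then (1 : ℚ) else 0),
      fun s => bigAnd ((List.finRange (A.d 0)).map fun i =>
        if s i = 1 then MP2.unary (Fin.cast A.d0 i)
        else .not (.unary (Fin.cast A.d0 i))), ?_, ?_, ?_, ?_⟩
    · intro G u
      exact Finset.mem_image.mpr ⟨fun i => G.U (Fin.cast A.d0 i) u, Finset.mem_univ _, rfl⟩
    · intro s hs G u
      obtain ⟨b, -, rfl⟩ := Finset.mem_image.mp hs
      have hfeat : A.feat G 0 u = fun i => if G.U (Fin.cast A.d0 i) u then (1 : ℚ) else 0 := rfl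
      have hatom : ∀ i : Fin (A.d 0),
          ((if (if b i then (1 : ℚ) else 0) = 1 then MP2.unary (Fin.cast A.d0 i)
            else .not (.unary (Fin.cast A.d0 i))).sat G u = true)
            ↔ (G.U (Fin.cast A.d0 i) u = b i) := by
        intro i
        cases hb : b i
        · rw [if_neg (by norm_num)]
          simp [MP2.sat]
        · rw [if_pos (by norm_num)]
          simp [MP2.sat]
      have hfun : (A.feat G 0 u = fun i => if b i then (1 : ℚ) else 0)
          ↔ ∀ i, G.U (Fin.cast A.d0 i) u = b i := by
        rw [hfeat, funext_iff]
        apply forall_congr'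
        intro i
        cases hb : b i <;> by_cases hU : G.U (Fin.cast A.d0 i) u = true <;>
          simp [hU] <;> norm_num
      constructor
      · intro h
        rw [hfun]
        intro i
        exact (hatom i).mp ((sat_bigAnd G u _).mp h _
          (List.mem_map.mpr ⟨i, List.mem_finRange i, rfl⟩))
      · intro h
        apply (sat_bigAnd G u _).mpr
        intro ψ hψ
        obtain ⟨i, -, rfl⟩ := List.mem_map.mp hψ
        exact (hatom i).mpr (hfun.mp h i)
    · intro _ s _
      apply isLocal_bigAnd
      intro ψ hψ
      obtain ⟨i, -, rfl⟩ := List.mem_map.mp hψ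
      split_ifs <;> simp [MP2.IsLocal]
    · intro _ s _
      apply isOut_bigAnd
      intro ψ hψ
      obtain ⟨i, -, rfl⟩ := List.mem_map.mp hψ
      split_ifs <;> simp [MP2.IsOutgoingOnly]
  | succ ℓ ih =>
    intro hL
    have hℓ : ℓ < A.L := hL
    obtain ⟨S, φ, hcov, hchar, hloc, hout⟩ := ih (Nat.le_of_lt hℓ)
    obtain ⟨tl, tr, htlr, htl, htr⟩ := hec ℓ hℓ
    classical
    obtain ⟨D, hDpos, hD⟩ := exists_common_denom (
      (((S ×ˢ (Finset.univ : Finset (Fin (A.d (ℓ+1))))).image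
          fun p => (A.Aout ℓ).mulVec p.1 p.2) ∪
        ((S ×ˢ Finset.univ).image fun p => (A.Ain ℓ).mulVec p.1 p.2)) ∪
      ((S ×ˢ Finset.univ).image fun p => (A.R ℓ).mulVec p.1 p.2))
    have hDout : ∀ s' ∈ S, ∀ i, ((lamOut A ℓ D s' i : ℚ))
        = (D : ℚ) * (A.Aout ℓ).mulVec s' i := by
      intro s' hs' i
      refine num_cast_eq (hD _ ?_)
      refine Finset.mem_union_left _ (Finset.mem_union_left _ ?_)
      exact Finset.mem_image.mpr ⟨(s', i), Finset.mem_product.mpr ⟨hs', Finset.mem_univ _⟩, rfl⟩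
    have hDin : ∀ s' ∈ S, ∀ i, ((lamIn A ℓ D s' i : ℚ))
        = (D : ℚ) * (A.Ain ℓ).mulVec s' i := by
      intro s' hs' i
      refine num_cast_eq (hD _ ?_)
      refine Finset.mem_union_left _ (Finset.mem_union_right _ ?_)
      exact Finset.mem_image.mpr ⟨(s', i), Finset.mem_product.mpr ⟨hs', Finset.mem_univ _⟩, rfl⟩
    have hDtop : ∀ s' ∈ S, ∀ i, ((lamTop A ℓ D s' i : ℚ))
        = (D : ℚ) * (A.R ℓ).mulVec s' i := by
      intro s' hs' i
      refine num_cast_eq (hD _ ?_)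
      refine Finset.mem_union_right _ ?_
      exact Finset.mem_image.mpr ⟨(s', i), Finset.mem_product.mpr ⟨hs', Finset.mem_univ _⟩, rfl⟩
    refine ⟨Snext A ℓ S D tl tr, phiNext A ℓ S φ D tl tr, ?_, ?_, ?_, ?_⟩
    · intro G u
      exact feat_mem_Snext A ℓ S φ D tl tr G (hcov G) (fun s hs u => hchar s hs G u)
        hDpos hDout hDin hDtop htl htr u
    · intro t _ G u
      exact sat_phiNext A ℓ S φ D tl tr G (hcov G) (fun s hs u => hchar s hs G u)
        hDpos hDout hDin hDtop htl htr htlr u t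
    · intro hA t _
      exact phiNext_local A ℓ S φ D tl tr (hA ℓ hℓ) (fun s hs => hloc hA s hs) t
    · intro hA t _
      exact phiNext_out A ℓ S φ D tl tr (hA ℓ hℓ) (fun s hs => hout hA s hs) t

end MP2aux

/-- Every `n`-GNN with eventually constant activations is
equivalent to some `n`-MP² formula; if the GNN is local the formula can be
taken in local MP², and if it is outgoing-only the formula can be taken
outgoing-only. -/
theorem gnn_to_mp2 {n : ℕ} (A : GNN n)
    (hec : ∀ ℓ < A.L, EventuallyConstant (A.act ℓ)) :
    (∃ φ : MP2 n, A.EquivMP2 φ) ∧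
    (A.IsLocal → ∃ φ : MP2 n, φ.IsLocal ∧ A.EquivMP2 φ) ∧
    (A.IsOutgoingOnly → ∃ φ : MP2 n, φ.IsOutgoingOnly ∧ A.EquivMP2 φ) := by
  classical
  obtain ⟨S, φ, hcov, hchar, hloc, hout⟩ := MP2aux.key A hec A.L le_rfl
  set i0 : Fin (A.d A.L) := ⟨0, A.dpos A.L⟩ with hi0
  set φA : MP2 n := MP2aux.bigOr ((S.filter fun t => 1/2 ≤ t i0).toList.map φ) with hφA
  have hequiv : A.EquivMP2 φA := by
    intro G v
    rw [GNN.accepts, hφA, MP2aux.sat_bigOr]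
    constructor
    · intro h
      exact ⟨φ (A.feat G A.L v), List.mem_map.mpr ⟨_, Finset.mem_toList.mpr
          (Finset.mem_filter.mpr ⟨hcov G v, h⟩), rfl⟩,
        (hchar _ (hcov G v) G v).mpr rfl⟩
    · rintro ⟨ψ, hmem, hsat⟩
      obtain ⟨t, ht, rfl⟩ := List.mem_map.mp hmem
      obtain ⟨htS, hhalf⟩ := Finset.mem_filter.mp (Finset.mem_toList.mp ht)
      have := (hchar t htS G v).mp hsat
      rw [this]
      exact hhalf
  refine ⟨⟨φA, hequiv⟩, ?_, ?_⟩
  · intro hA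
    refine ⟨φA, ?_, hequiv⟩
    apply MP2aux.isLocal_bigOr
    intro ψ hψ
    obtain ⟨t, ht, rfl⟩ := List.mem_map.mp hψ
    exact hloc hA t (Finset.filter_subset _ _ (Finset.mem_toList.mp ht))
  · intro hA
    refine ⟨φA, ?_, hequiv⟩
    apply MP2aux.isOut_bigOr
    intro ψ hψ
    obtain ⟨t, ht, rfl⟩ := List.mem_map.mp hψ
    exact hout hA t (Finset.filter_subset _ _ (Finset.mem_toList.mp ht))
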